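/- Let A_k be the 6×6 integer matrix with rows (-1,-1,0,0,-1,0), (0,-1,0,0,-1,0), (0,0,1,1,1,0), (0,0,0,1,1,0), (0,0,0,0,0,0), (0,0,0,0,1,-k). Then for every integer k ≥ 2, the polynomial det(t·A_k - A_kᵀ) equals (t² - t + 1)² up to multiplication by ±t^j for some natural number j. -/

import Mathlib

set_option maxRecDepth 16000
set_option maxHeartbeats 1000000

open Matrix Polynomial

def A (k : ℤ) : Matrix (Fin 6) (Fin 6) ℤ :=
  !![-1,-1,0,0,-1,0; 0,-1,0,0,-1,0; 0,0,1,1,1,0; 0,0,0,1,1,0; 0,0,0,0,0,0; 0,0,0,0,1,-k]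

lemma c5 {α : Type*} (a : α) (f : Fin 5 → α) : Matrix.vecCons a f 5 = f 4 := rfl
lemma c4 {α : Type*} (a : α) (f : Fin 4 → α) : Matrix.vecCons a f 4 = f 3 := rfl
lemma c3 {α : Type*} (a : α) (f : Fin 3 → α) : Matrix.vecCons a f 3 = f 2 := rfl
lemma c2 {α : Type*} (a : α) (f : Fin 2 → α) : Matrix.vecCons a f 2 = f 1 := rfl
lemma c1 {α : Type*} (a : α) (f : Fin 1 → α) : Matrix.vecCons a f 1 = f 0 := rfl

lemma vec6_5 {α : Type*} (a b c d e f : α) : ![a,b,c,d,e,f] 5 = f := rfl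

theorem stmt_0 (k : ℤ) (hk : 2 ≤ k) :
    ∃ (j : ℕ) (ε : ℤ[X]), (ε = 1 ∨ ε = -1) ∧
      ((X : ℤ[X]) • (A k).map C - ((A k).map C)ᵀ).det
        = ε * X ^ j * (X ^ 2 - X + 1) ^ 2 := by
  refine ⟨1, 1, Or.inl rfl, ?_⟩
  have h : (X : ℤ[X]) • (A k).map C - ((A k).map C)ᵀ =
      !![-X+1, -X, 0, 0, -X, 0;
         1, -X+1, 0, 0, -X, 0;
         0, 0, X-1, X, X, 0;
         0, 0, -1, X-1, X, 0;
         1, 1, -1, -1, 0, -1;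
         0, 0, 0, 0, X, (1-X) * C k] := by
    refine Matrix.ext fun i j => ?_
    fin_cases i <;> fin_cases j <;>
      simp [A, Matrix.vecHead, Matrix.vecTail, vec6_5, c5, c4, c3, c2, c1] <;> ring
  rw [h]
  simp (config := {decide := true}) [det_succ_row_zero, Fin.sum_univ_succ, Fin.succAbove,
    Matrix.submatrix_apply, Matrix.vecHead, Matrix.vecTail,
    show ((2:Fin 4).castSucc) = 2 from rfl, show ((2:Fin 5).castSucc) = 2 from rfl,
    show (((2:Fin 4).succ).castSucc) = 3 from rfl]
  ring
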